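/- Let κ > 0 and μ > 0, and define W on the open set of real 3×3 matrices F with det F > 0 by W(F) = (κ/2)·((1/2)((det F)^2 − 1) − ln(det F)) + (μ/2)·((det F)^{−2/3}·tr(F F^T) − 3). Then W is Fréchet differentiable at every such F, and its derivative in direction H is DW(F)[H] = tr((τ(F)·F^{−T})^T · H), where τ(F) = (κ/2)((det F)^2 − 1)·I + μ·dev((det F)^{−2/3} F F^T) and dev(A) = A − (tr(A)/3)·I. -/

import Mathlib

attribute [local instance] Matrix.normedAddCommGroup Matrix.normedSpace

open Matrix

noncomputable section StrainAux

abbrev Mat3 := Matrix (Fin 3) (Fin 3) ℝ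

def entryCLM (i j : Fin 3) :
    @ContinuousLinearMap ℝ ℝ _ _ (RingHom.id ℝ) Mat3
      (@UniformSpace.toTopologicalSpace Mat3 (@PseudoMetricSpace.toUniformSpace Mat3
        (@SeminormedAddCommGroup.toPseudoMetricSpace Mat3
          (@NormedAddCommGroup.toSeminormedAddCommGroup Mat3 Matrix.normedAddCommGroup))))
      (@AddCommGroup.toAddCommMonoid Mat3 (@NormedAddCommGroup.toAddCommGroup Mat3 Matrix.normedAddCommGroup))
      ℝ _ _ (@NormedSpace.toModule ℝ Mat3 _ _ Matrix.normedSpace) _ :=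
  LinearMap.toContinuousLinearMap
    { toFun := fun M => M i j, map_add' := fun _ _ => rfl, map_smul' := fun _ _ => rfl }

@[simp] lemma entryCLM_apply (i j : Fin 3) (M : Mat3) : entryCLM i j M = M i j := rfl

lemma entry_hasFDerivAt (i j : Fin 3) (F : Mat3) :
    HasFDerivAt (fun M : Mat3 => M i j) (entryCLM i j) F :=
  (entryCLM i j).hasFDerivAt

def traceMulCLM (A : Mat3) :
    @ContinuousLinearMap ℝ ℝ _ _ (RingHom.id ℝ) Mat3
      (@UniformSpace.toTopologicalSpace Mat3 (@PseudoMetricSpace.toUniformSpace Mat3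
        (@SeminormedAddCommGroup.toPseudoMetricSpace Mat3
          (@NormedAddCommGroup.toSeminormedAddCommGroup Mat3 Matrix.normedAddCommGroup))))
      (@AddCommGroup.toAddCommMonoid Mat3 (@NormedAddCommGroup.toAddCommGroup Mat3 Matrix.normedAddCommGroup))
      ℝ _ _ (@NormedSpace.toModule ℝ Mat3 _ _ Matrix.normedSpace) _ :=
  LinearMap.toContinuousLinearMap
    ((Matrix.traceLinearMap (Fin 3) ℝ ℝ).comp (LinearMap.mulLeft ℝ A))

@[simp] lemma traceMulCLM_apply (A M : Mat3) : traceMulCLM A M = (A * M).trace := rfl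

lemma det3_hasFDerivAt (F : Mat3) :
    HasFDerivAt (fun M : Mat3 => M.det) (traceMulCLM F.adjugate) F := by
  have hE := fun i j => entry_hasFDerivAt i j F
  have h := (((((((hE 0 0).mul (hE 1 1)).mul (hE 2 2)).sub
      (((hE 0 0).mul (hE 1 2)).mul (hE 2 1))).sub
      (((hE 0 1).mul (hE 1 0)).mul (hE 2 2))).add
      (((hE 0 1).mul (hE 1 2)).mul (hE 2 0))).add
      (((hE 0 2).mul (hE 1 0)).mul (hE 2 1))).sub
      (((hE 0 2).mul (hE 1 1)).mul (hE 2 0))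
  have h2 := h.congr_of_eventuallyEq
    (Filter.Eventually.of_forall fun M : Mat3 => Matrix.det_fin_three M)
  refine h2.congr_fderiv ?_
  ext H
  simp [Matrix.adjugate_fin_three, Matrix.trace, Matrix.mul_apply, Matrix.diag,
    Fin.sum_univ_three, Matrix.cons_val_zero, Matrix.cons_val_one, smul_eq_mul]
  ring

lemma continuous_det3 : Continuous (fun M : Mat3 => M.det) := by
  have hc : ∀ i j : Fin 3, Continuous fun M : Mat3 => M i j :=
    fun i j => (entryCLM i j).continuous
  simp only [Matrix.det_fin_three]
  fun_prop

lemma trq_hasFDerivAt (F : Mat3) :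
    HasFDerivAt (fun M : Mat3 => (M * M.transpose).trace) ((2 : ℝ) • traceMulCLM F.transpose) F := by
  have hE := fun i j => entry_hasFDerivAt i j F
  have h := ((((((((((hE 0 0).mul (hE 0 0)).add ((hE 0 1).mul (hE 0 1))).add
      ((hE 0 2).mul (hE 0 2))).add ((hE 1 0).mul (hE 1 0))).add
      ((hE 1 1).mul (hE 1 1))).add ((hE 1 2).mul (hE 1 2))).add
      ((hE 2 0).mul (hE 2 0))).add ((hE 2 1).mul (hE 2 1))).add
      ((hE 2 2).mul (hE 2 2)))
  refine (h.congr_of_eventuallyEq (Filter.Eventually.of_forall fun M : Mat3 => ?_)).congr_fderiv ?_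
  · simp [Matrix.trace, Matrix.diag, Matrix.mul_apply, Matrix.transpose_apply,
      Fin.sum_univ_three]
    ring
  ext H
  simp [Matrix.trace, Matrix.diag, Matrix.mul_apply, Matrix.transpose_apply,
    Fin.sum_univ_three, smul_eq_mul]
  ring

end StrainAux

theorem strain_energy_hasDeriv
    (κ μ : ℝ) (hκ : 0 < κ) (hμ : 0 < μ)
    (W : Matrix (Fin 3) (Fin 3) ℝ → ℝ)
    (hW : ∀ F : Matrix (Fin 3) (Fin 3) ℝ, 0 < F.det →
      W F = (κ/2) * ((1/2) * (F.det ^ 2 - 1) - Real.log F.det)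
        + (μ/2) * ((F.det ^ (-(2 : ℝ)/3)) * (F * F.transpose).trace - 3))
    (τ : Matrix (Fin 3) (Fin 3) ℝ → Matrix (Fin 3) (Fin 3) ℝ)
    (hτ : ∀ F : Matrix (Fin 3) (Fin 3) ℝ,
      τ F = ((κ/2) * (F.det ^ 2 - 1)) • (1 : Matrix (Fin 3) (Fin 3) ℝ)
        + μ • ((F.det ^ (-(2 : ℝ)/3)) • (F * F.transpose)
            - ((((F.det ^ (-(2 : ℝ)/3)) • (F * F.transpose)).trace / 3)
                • (1 : Matrix (Fin 3) (Fin 3) ℝ)))) :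
    ∀ F : Matrix (Fin 3) (Fin 3) ℝ, 0 < F.det →
      DifferentiableAt ℝ W F ∧
      ∀ H : Matrix (Fin 3) (Fin 3) ℝ,
        fderiv ℝ W F H = ((τ F * F⁻¹.transpose).transpose * H).trace := by
  intro F hF
  have hd0 : F.det ≠ 0 := ne_of_gt hF
  have hdet := det3_hasFDerivAt F
  have hlog := hdet.log hd0
  have hrpow := hdet.rpow_const (p := -(2:ℝ)/3) (Or.inl hd0)
  have htr := trq_hasFDerivAt F
  have hg := (((((hdet.mul hdet).sub_const 1).const_mul (1/2 : ℝ)).sub hlog).const_mul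
      (κ/2)).add (((hrpow.mul htr).sub_const (3:ℝ)).const_mul (μ/2))
  have hopen : IsOpen {M : Mat3 | 0 < M.det} := isOpen_lt continuous_const continuous_det3
  have hWeq : W =ᶠ[nhds F] (fun M : Mat3 =>
      (κ/2) * ((1/2) * (M.det * M.det - 1) - Real.log M.det)
        + (μ/2) * ((M.det ^ (-(2 : ℝ)/3)) * (M * M.transpose).trace - 3)) :=
    Filter.eventuallyEq_of_mem (hopen.mem_nhds hF) (fun M hM => by
      rw [hW M hM, pow_two])
  have hW' := hg.congr_of_eventuallyEq hWeq
  refine ⟨hW'.differentiableAt, fun H => ?_⟩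
  rw [show fderiv ℝ W F H = _ from DFunLike.congr_fun hW'.fderiv H, hτ]
  have hu : IsUnit F.det := isUnit_iff_ne_zero.mpr hd0
  have h1 : F * F.transpose * F⁻¹.transpose = F := by
    rw [Matrix.mul_assoc, ← Matrix.transpose_mul, Matrix.nonsing_inv_mul F hu,
      Matrix.transpose_one, Matrix.mul_one]
  have hinv : F⁻¹ = (F.det)⁻¹ • F.adjugate := by
    rw [Matrix.inv_def, Ring.inverse_eq_inv']
  have hXY : F.det ^ (-(2:ℝ)/3 - 1) * F.det = F.det ^ (-(2:ℝ)/3) := by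
    rw [← Real.rpow_add_one hd0]; norm_num
  have h2 : F.adjugate * (F * F.transpose) = F.det • F.transpose := by
    rw [← Matrix.mul_assoc, Matrix.adjugate_mul, Matrix.smul_mul, Matrix.one_mul]
  rw [← hXY]
  simp only [Matrix.add_mul, Matrix.sub_mul, Matrix.smul_mul, Matrix.one_mul,
    Matrix.transpose_add, Matrix.transpose_sub, Matrix.transpose_smul,
    Matrix.transpose_transpose, Matrix.transpose_mul, Matrix.mul_smul, h1, hinv, h2,
    Matrix.trace_add, Matrix.trace_sub, Matrix.trace_smul,
    ContinuousLinearMap.add_apply, ContinuousLinearMap.smul_apply,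
    ContinuousLinearMap.sub_apply, traceMulCLM_apply, smul_eq_mul]
  field_simp
  ring
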